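/- arXiv:1507.05816 — 10 statements merged into one kernel-verified Lean document; each statement's English description precedes it below -/
import Mathlib

section
/- If B is a 𝔹ℂ-balanced subset of a 𝔹ℂ-module X, then e₁B and e₂B are balanced sets in the ℂ(i)-vector spaces e₁X and e₂X respectively, and moreover e₁B ⊆ B and e₂B ⊆ B. -/
noncomputable section

abbrev BC : Type := ℂ × ℂ
abbrev Hyp : Type := ℝ × ℝ

def BC.e1 : BC := (1, 0)
def BC.e2 : BC := (0, 1)

def normK (z : BC) : Hyp := (‖z.1‖, ‖z.2‖)

def hypToBC (l : Hyp) : BC := ((l.1 : ℂ), (l.2 : ℂ))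

def embedC (c : ℂ) : BC := (c, c)

def ltH (a b : Hyp) : Prop := a.1 < b.1 ∧ a.2 < b.2

def absH (a : Hyp) : Hyp := (|a.1|, |a.2|)

def BCBalanced {X : Type*} [AddCommGroup X] [Module BC X] (B : Set X) : Prop :=
  ∀ l : BC, normK l ≤ 1 → ∀ x ∈ B, l • x ∈ B

def BCConvex {X : Type*} [AddCommGroup X] [Module BC X] (B : Set X) : Prop :=
  ∀ x ∈ B, ∀ y ∈ B, ∀ l : Hyp, 0 ≤ l → l ≤ 1 →
    hypToBC l • x + hypToBC (1 - l) • y ∈ B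

def BCAbsorbing {X : Type*} [AddCommGroup X] [Module BC X] (B : Set X) : Prop :=
  ∀ x : X, ∃ ε : Hyp, (0 < ε.1 ∧ 0 < ε.2) ∧
    ∀ l : Hyp, 0 ≤ l → l ≤ ε → hypToBC l • x ∈ B

def CxConvex {X : Type*} [AddCommGroup X] [Module BC X] (S : Set X) : Prop :=
  ∀ x ∈ S, ∀ y ∈ S, ∀ t : ℝ, 0 ≤ t → t ≤ 1 →
    embedC (t : ℂ) • x + embedC ((1 - t : ℝ) : ℂ) • y ∈ S

def idemSum {X : Type*} [AddCommGroup X] [Module BC X] (B : Set X) : Set X :=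
  Set.image2 (fun b b' => BC.e1 • b + BC.e2 • b') B B

def IsDSeminorm {X : Type*} [AddCommGroup X] [Module BC X] (p : X → Hyp) : Prop :=
  (∀ l : BC, ∀ x : X, p (l • x) = normK l * p x) ∧
  (∀ x y : X, p (x + y) ≤ p x + p y)

def gaugeD {X : Type*} [AddCommGroup X] [Module BC X] (B : Set X) (x : X) : Hyp :=
  (sInf (Prod.fst '' {α : Hyp | (0 < α.1 ∧ 0 < α.2) ∧ x ∈ (fun b => hypToBC α • b) '' B}),
   sInf (Prod.snd '' {α : Hyp | (0 < α.1 ∧ 0 < α.2) ∧ x ∈ (fun b => hypToBC α • b) '' B}))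

theorem balanced_idempotent_parts {X : Type*} [AddCommGroup X] [Module BC X] (B : Set X)
    (hB : BCBalanced B) :
    (∀ a : ℂ, ‖a‖ ≤ 1 → ∀ x ∈ (fun x => BC.e1 • x) '' B,
        embedC a • x ∈ (fun x => BC.e1 • x) '' B) ∧
    (∀ a : ℂ, ‖a‖ ≤ 1 → ∀ x ∈ (fun x => BC.e2 • x) '' B,
        embedC a • x ∈ (fun x => BC.e2 • x) '' B) ∧
    (fun x => BC.e1 • x) '' B ⊆ B ∧ (fun x => BC.e2 • x) '' B ⊆ B := by
  have hle : ∀ a : ℂ, ‖a‖ ≤ 1 → normK (a, 1) ≤ 1 := by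
    intro a ha
    constructor <;> simp [normK, ha]
  have hle' : ∀ a : ℂ, ‖a‖ ≤ 1 → normK (1, a) ≤ 1 := by
    intro a ha
    constructor <;> simp [normK, ha]
  refine ⟨?_, ?_, ?_, ?_⟩
  · rintro a ha x ⟨b, hb, rfl⟩
    refine ⟨(a, 1) • b, hB (a, 1) (hle a ha) b hb, ?_⟩
    simp only [← mul_smul, BC.e1, embedC, Prod.mk_mul_mk]
    ring_nf
  · rintro a ha x ⟨b, hb, rfl⟩
    refine ⟨(1, a) • b, hB (1, a) (hle' a ha) b hb, ?_⟩
    simp only [← mul_smul, BC.e2, embedC, Prod.mk_mul_mk]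
    ring_nf
  · rintro x ⟨b, hb, rfl⟩
    exact hB BC.e1 (by constructor <;> simp [normK, BC.e1]) b hb
  · rintro x ⟨b, hb, rfl⟩
    exact hB BC.e2 (by constructor <;> simp [normK, BC.e2]) b hb
end
end

section
/- If B is a 𝔹ℂ-convex subset of a 𝔹ℂ-module X, then B = e₁B + e₂B. -/
noncomputable section

theorem bcConvex_eq_idemSum {X : Type*} [AddCommGroup X] [Module BC X] (B : Set X)
    (hB : BCConvex B) : B = idemSum B := by
  ext x
  constructor
  · intro hx
    refine ⟨x, hx, x, hx, ?_⟩
    show BC.e1 • x + BC.e2 • x = x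
    have : BC.e1 • x + BC.e2 • x = (BC.e1 + BC.e2) • x := (add_smul _ _ _).symm
    rw [this]
    have h1 : BC.e1 + BC.e2 = (1 : BC) := by
      simp [BC.e1, BC.e2, Prod.ext_iff]
    rw [h1, one_smul]
  · rintro ⟨b, hb, b', hb', rfl⟩
    have := hB b hb b' hb' (1, 0) (by constructor <;> norm_num) (by constructor <;> norm_num)
    have he1 : hypToBC (1, 0) = BC.e1 := by simp [hypToBC, BC.e1]
    have he2 : hypToBC (1 - (1, 0)) = BC.e2 := by
      simp [hypToBC, BC.e2, Prod.ext_iff]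
    rwa [he1, he2] at this
end
end

section
/- If X is a 𝔹ℂ-module and B ⊆ X is such that e₁B and e₂B are convex sets in the ℂ(i)-vector spaces e₁X and e₂X respectively, then e₁B + e₂B is a 𝔹ℂ-convex subset of X. -/
noncomputable section

theorem idemSum_bcConvex_of_parts_convex {X : Type*} [AddCommGroup X] [Module BC X]
    (B : Set X)
    (h1 : CxConvex ((fun x => BC.e1 • x) '' B))
    (h2 : CxConvex ((fun x => BC.e2 • x) '' B)) :
    BCConvex (idemSum B) := by
  have k1 : ∀ (m : Hyp) (z : X), hypToBC m • (BC.e1 • z) = embedC (m.1 : ℂ) • (BC.e1 • z) := by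
    intro m z
    rw [smul_smul, smul_smul]
    congr 1
    simp [hypToBC, embedC, BC.e1, Prod.ext_iff]
  have k2 : ∀ (m : Hyp) (z : X), hypToBC m • (BC.e2 • z) = embedC (m.2 : ℂ) • (BC.e2 • z) := by
    intro m z
    rw [smul_smul, smul_smul]
    congr 1
    simp [hypToBC, embedC, BC.e2, Prod.ext_iff]
  rintro x ⟨a, ha, a', ha', rfl⟩ y ⟨b, hb, b', hb', rfl⟩ l hl0 hl1
  have s1 : ((1 : Hyp) - l).1 = 1 - l.1 := rfl
  have s2 : ((1 : Hyp) - l).2 = 1 - l.2 := rfl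
  have m1 : embedC (l.1 : ℂ) • (BC.e1 • a) + embedC ((1 - l.1 : ℝ) : ℂ) • (BC.e1 • b)
      ∈ (fun x => BC.e1 • x) '' B :=
    h1 _ ⟨a, ha, rfl⟩ _ ⟨b, hb, rfl⟩ l.1 hl0.1 hl1.1
  have m2 : embedC (l.2 : ℂ) • (BC.e2 • a') + embedC ((1 - l.2 : ℝ) : ℂ) • (BC.e2 • b')
      ∈ (fun x => BC.e2 • x) '' B :=
    h2 _ ⟨a', ha', rfl⟩ _ ⟨b', hb', rfl⟩ l.2 hl0.2 hl1.2
  obtain ⟨c, hc, hce⟩ := m1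
  obtain ⟨c', hc', hce'⟩ := m2
  refine ⟨c, hc, c', hc', ?_⟩
  dsimp only
  simp only [] at hce hce'
  rw [hce, hce']
  rw [smul_add, smul_add, k1 l a, k2 l a', k1 _ b, k2 _ b', s1, s2]
  push_cast
  abel
end
end

section
/- There exists a subset B of 𝔹ℂ such that e₁B and e₂B are convex in the ℂ(i)-vector spaces e₁𝔹ℂ and e₂𝔹ℂ respectively, but B ≠ e₁B + e₂B (hence B is not 𝔹ℂ-convex). For example B = {e₁z₁ + e₂z₂ : |z₁| + |z₂| < 2} works: e₁·(3/2) ∈ e₁B, e₂·(3/2) ∈ e₂B, but 3/2 ∉ B. -/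
noncomputable section

theorem exists_parts_convex_not_bcConvex :
    ∃ B : Set BC,
      CxConvex ((fun x => BC.e1 • x) '' B) ∧
      CxConvex ((fun x => BC.e2 • x) '' B) ∧
      B ≠ idemSum B ∧ ¬ BCConvex B := by
  refine ⟨{z : BC | ‖z.1‖ + ‖z.2‖ < 2}, ?_, ?_, ?_, ?_⟩
  · rintro x ⟨a, ha, rfl⟩ y ⟨b, hb, rfl⟩ t ht0 ht1
    simp only [Set.mem_setOf_eq] at ha hb
    have ha' : ‖a.1‖ < 2 := lt_of_le_of_lt (le_add_of_nonneg_right (by positivity)) ha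
    have hb' : ‖b.1‖ < 2 := lt_of_le_of_lt (le_add_of_nonneg_right (by positivity)) hb
    refine ⟨((t : ℂ) * a.1 + ((1 - t : ℝ) : ℂ) * b.1, 0), ?_, ?_⟩
    · simp only [Set.mem_setOf_eq, norm_zero, add_zero]
      calc ‖(t : ℂ) * a.1 + ((1 - t : ℝ) : ℂ) * b.1‖
          ≤ ‖(t : ℂ) * a.1‖ + ‖((1 - t : ℝ) : ℂ) * b.1‖ :=
            norm_add_le _ _
        _ = t * ‖a.1‖ + (1 - t) * ‖b.1‖ := by
            rw [norm_mul, norm_mul, Complex.norm_real, Complex.norm_real, Real.norm_eq_abs, Real.norm_eq_abs,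
              abs_of_nonneg ht0, abs_of_nonneg (by linarith)]
        _ < 2 := by
            have := (convex_Iio (2 : ℝ)) (Set.mem_Iio.2 ha') (Set.mem_Iio.2 hb')
              ht0 (by linarith : (0:ℝ) ≤ 1 - t) (by ring)
            simpa [smul_eq_mul] using this
    · simp [BC.e1, embedC, Prod.ext_iff, smul_eq_mul]
  · rintro x ⟨a, ha, rfl⟩ y ⟨b, hb, rfl⟩ t ht0 ht1
    simp only [Set.mem_setOf_eq] at ha hb
    have ha' : ‖a.2‖ < 2 := lt_of_le_of_lt (le_add_of_nonneg_left (by positivity)) ha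
    have hb' : ‖b.2‖ < 2 := lt_of_le_of_lt (le_add_of_nonneg_left (by positivity)) hb
    refine ⟨(0, (t : ℂ) * a.2 + ((1 - t : ℝ) : ℂ) * b.2), ?_, ?_⟩
    · simp only [Set.mem_setOf_eq, norm_zero, zero_add]
      calc ‖(t : ℂ) * a.2 + ((1 - t : ℝ) : ℂ) * b.2‖
          ≤ ‖(t : ℂ) * a.2‖ + ‖((1 - t : ℝ) : ℂ) * b.2‖ :=
            norm_add_le _ _
        _ = t * ‖a.2‖ + (1 - t) * ‖b.2‖ := by
            rw [norm_mul, norm_mul, Complex.norm_real, Complex.norm_real, Real.norm_eq_abs, Real.norm_eq_abs,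
              abs_of_nonneg ht0, abs_of_nonneg (by linarith)]
        _ < 2 := by
            have := (convex_Iio (2 : ℝ)) (Set.mem_Iio.2 ha') (Set.mem_Iio.2 hb')
              ht0 (by linarith : (0:ℝ) ≤ 1 - t) (by ring)
            simpa [smul_eq_mul] using this
    · simp [BC.e2, embedC, Prod.ext_iff, smul_eq_mul]
  · intro h
    have h1 : ((3/2 : ℂ), (0:ℂ)) ∈ {z : BC | ‖z.1‖ + ‖z.2‖ < 2} := by
      simp only [Set.mem_setOf_eq]
      norm_num [norm_div, Complex.norm_ofNat]
    have h2 : ((0 : ℂ), (3/2 : ℂ)) ∈ {z : BC | ‖z.1‖ + ‖z.2‖ < 2} := by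
      simp only [Set.mem_setOf_eq]
      norm_num [norm_div, Complex.norm_ofNat]
    have hmem : (((3/2 : ℂ), (3/2 : ℂ)) : BC) ∈
        idemSum ({z : BC | ‖z.1‖ + ‖z.2‖ < 2}) :=
      Set.mem_image2.2 ⟨_, h1, _, h2, by simp [BC.e1, BC.e2, Prod.ext_iff, smul_eq_mul]⟩
    rw [← h] at hmem
    simp only [Set.mem_setOf_eq] at hmem
    norm_num [norm_div, Complex.norm_ofNat] at hmem
  · intro h
    have h1 : ((3/2 : ℂ), (0:ℂ)) ∈ {z : BC | ‖z.1‖ + ‖z.2‖ < 2} := by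
      simp only [Set.mem_setOf_eq]
      norm_num [norm_div, Complex.norm_ofNat]
    have h2 : ((0 : ℂ), (3/2 : ℂ)) ∈ {z : BC | ‖z.1‖ + ‖z.2‖ < 2} := by
      simp only [Set.mem_setOf_eq]
      norm_num [norm_div, Complex.norm_ofNat]
    have key := h _ h1 _ h2 ((1 : ℝ), (0 : ℝ))
      (Prod.mk_le_mk.2 ⟨by norm_num, by norm_num⟩)
      (Prod.mk_le_mk.2 ⟨by norm_num, by norm_num⟩)
    have he : hypToBC ((1,0) : Hyp) • ((((3/2 : ℂ), (0:ℂ))) : BC) +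
        hypToBC ((1 : Hyp) - (1,0)) • (((0:ℂ), (3/2:ℂ)) : BC) = (((3/2:ℂ),(3/2:ℂ)) : BC) := by
      simp [hypToBC, Prod.ext_iff, smul_eq_mul, Prod.sub_def]
    rw [he] at key
    simp only [Set.mem_setOf_eq] at key
    norm_num [norm_div, Complex.norm_ofNat] at key
end
end

section
/- In a topological 𝔹ℂ-module X, if B is a 𝔹ℂ-convex subset then the interior B° and the closure of B are also 𝔹ℂ-convex, and B° = e₁B° + e₂B°, cl(B) = e₁cl(B) + e₂cl(B). -/
noncomputable section

section Aux

variable {X : Type*} [AddCommGroup X] [Module BC X]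

lemma hyp_sum (l : Hyp) : hypToBC l + hypToBC (1 - l) = 1 := by
  simp [hypToBC, Prod.ext_iff]

lemma idemSum_of_bcConvex (S : Set X) (hS : BCConvex S) : S = idemSum S := by
  apply Set.Subset.antisymm
  · intro x hx
    refine ⟨x, hx, x, hx, ?_⟩
    show BC.e1 • x + BC.e2 • x = x
    rw [← add_smul]
    have h : BC.e1 + BC.e2 = 1 := by simp [BC.e1, BC.e2, Prod.ext_iff]
    rw [h, one_smul]
  · rintro _ ⟨b, hb, b', hb', rfl⟩
    have h := hS b hb b' hb' (1, 0) (by simp [Prod.le_def]) (by simp [Prod.le_def])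
    have h1 : hypToBC (1, 0) = BC.e1 := by simp [hypToBC, BC.e1, Prod.ext_iff]
    have h2 : hypToBC (1 - ((1, 0) : Hyp)) = BC.e2 := by
      simp [hypToBC, BC.e2, Prod.ext_iff]
    rwa [h1, h2] at h

lemma combo_add (l : Hyp) (x y d : X) :
    hypToBC l • (x + d) + hypToBC (1 - l) • (y + d) =
      hypToBC l • x + hypToBC (1 - l) • y + d := by
  rw [smul_add, smul_add, add_add_add_comm, ← add_smul, hyp_sum, one_smul]

end Aux

theorem bcConvex_interior_closure {X : Type*} [AddCommGroup X] [Module BC X]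
    [TopologicalSpace X] [T2Space X] [ContinuousAdd X] [ContinuousSMul BC X]
    (B : Set X) (hB : BCConvex B) :
    BCConvex (interior B) ∧ BCConvex (closure B) ∧
    interior B = idemSum (interior B) ∧ closure B = idemSum (closure B) := by
  have hint : BCConvex (interior B) := by
    intro x hx y hy l hl0 hl1
    set z := hypToBC l • x + hypToBC (1 - l) • y with hz
    rw [mem_interior]
    refine ⟨(fun w => x + (w - z)) ⁻¹' interior B ∩ (fun w => y + (w - z)) ⁻¹' interior B,
      ?_, ?_, ?_⟩
    · rintro w ⟨hw1, hw2⟩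
      have h := hB _ (interior_subset hw1) _ (interior_subset hw2) l hl0 hl1
      rwa [combo_add, ← hz, add_sub_cancel] at h
    · have hc : ∀ c : X, Continuous (fun w : X => c + (w - z)) := by
        intro c
        have : (fun w : X => c + (w - z)) = fun w => (c - z) + w := by ext w; abel
        rw [this]; exact continuous_const.add continuous_id
      exact ((isOpen_interior.preimage (hc x)).inter (isOpen_interior.preimage (hc y)))
    · constructor <;> simp [hx, hy]
  have hcl : BCConvex (closure B) := by
    intro x hx y hy l hl0 hl1
    have hcont : Continuous (fun p : X × X => hypToBC l • p.1 + hypToBC (1 - l) • p.2) :=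
      (continuous_fst.const_smul _).add (continuous_snd.const_smul _)
    exact map_mem_closure₂ (f := fun a b => hypToBC l • a + hypToBC (1 - l) • b)
      hcont hx hy (fun a ha b hb => hB a ha b hb l hl0 hl1)
  exact ⟨hint, hcl, idemSum_of_bcConvex _ hint, idemSum_of_bcConvex _ hcl⟩
end
end

section
/- If B is a 𝔹ℂ-absorbing subset of a 𝔹ℂ-module X, then e₁B and e₂B are absorbing sets in the ℂ(i)-vector spaces e₁X and e₂X respectively. -/
noncomputable section

theorem absorbing_idempotent_parts {X : Type*} [AddCommGroup X] [Module BC X]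
    (B : Set X) (hB : BCAbsorbing B) :
    (∀ x : X, ∃ ε : ℝ, 0 < ε ∧ ∀ t : ℝ, 0 ≤ t → t ≤ ε →
        embedC (t : ℂ) • (BC.e1 • x) ∈ (fun y => BC.e1 • y) '' B) ∧
    (∀ x : X, ∃ ε : ℝ, 0 < ε ∧ ∀ t : ℝ, 0 ≤ t → t ≤ ε →
        embedC (t : ℂ) • (BC.e2 • x) ∈ (fun y => BC.e2 • y) '' B) := by
  constructor
  · intro x
    obtain ⟨ε, ⟨h1, h2⟩, hl⟩ := hB x
    refine ⟨ε.1, h1, fun t ht0 htε => ?_⟩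
    refine ⟨hypToBC (t, 0) • x, hl (t, 0) ⟨ht0, le_refl 0⟩ ⟨htε, le_of_lt h2⟩, ?_⟩
    show BC.e1 • hypToBC (t, 0) • x = embedC (t : ℂ) • (BC.e1 • x)
    rw [smul_smul, smul_smul]
    congr 1
    simp [BC.e1, hypToBC, embedC, Prod.ext_iff, mul_comm]
  · intro x
    obtain ⟨ε, ⟨h1, h2⟩, hl⟩ := hB x
    refine ⟨ε.2, h2, fun t ht0 htε => ?_⟩
    refine ⟨hypToBC (0, t) • x, hl (0, t) ⟨le_refl 0, ht0⟩ ⟨le_of_lt h1, htε⟩, ?_⟩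
    show BC.e2 • hypToBC (0, t) • x = embedC (t : ℂ) • (BC.e2 • x)
    rw [smul_smul, smul_smul]
    congr 1
    simp [BC.e2, hypToBC, embedC, Prod.ext_iff, mul_comm]
end
end

section
/- Every neighbourhood of 0 in a topological 𝔹ℂ-module is 𝔹ℂ-absorbing, and every neighbourhood of 0 contains a 𝔹ℂ-balanced neighbourhood of 0. -/
noncomputable section

theorem nhds_zero_absorbing_and_balanced {X : Type*} [AddCommGroup X] [Module BC X]
    [TopologicalSpace X] [T2Space X] [ContinuousAdd X] [ContinuousSMul BC X]
    (U : Set X) (hU : U ∈ nhds (0 : X)) :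
    BCAbsorbing U ∧ ∃ V ∈ nhds (0 : X), BCBalanced V ∧ V ⊆ U := by
  constructor
  · intro x
    have hf : Continuous fun l : Hyp => hypToBC l • x := by
      apply Continuous.smul ?_ continuous_const
      exact (Complex.continuous_ofReal.comp continuous_fst).prodMk
        (Complex.continuous_ofReal.comp continuous_snd)
    have h0 : (fun l : Hyp => hypToBC l • x) 0 = 0 := by
      have h : hypToBC 0 = (0 : BC) := by
        simp only [hypToBC, Prod.fst_zero, Prod.snd_zero, Complex.ofReal_zero]; rfl
      simp [h]
    have hpre : (fun l : Hyp => hypToBC l • x) ⁻¹' U ∈ nhds (0 : Hyp) := by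
      have := hf.continuousAt (x := (0 : Hyp))
      exact this (by rw [h0]; exact hU)
    obtain ⟨δ, hδ, hball⟩ := Metric.mem_nhds_iff.1 hpre
    refine ⟨(δ/2, δ/2), ⟨by positivity, by positivity⟩, ?_⟩
    intro l hl0 hlε
    apply hball
    have h1 : |l.1| < δ := by rw [abs_of_nonneg hl0.1]; linarith [hlε.1]
    have h2 : |l.2| < δ := by rw [abs_of_nonneg hl0.2]; linarith [hlε.2]
    simp only [Metric.mem_ball, Prod.dist_eq, Real.dist_eq, sub_zero, Prod.fst_zero,
      Prod.snd_zero]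
    exact max_lt h1 h2
  · have hc : ContinuousAt (fun p : BC × X => p.1 • p.2) (0, 0) :=
      continuous_smul.continuousAt
    have hmem : {p : BC × X | p.1 • p.2 ∈ U} ∈ nhds ((0 : BC), (0 : X)) := by
      apply hc; simpa using hU
    rw [nhds_prod_eq, Filter.mem_prod_iff] at hmem
    obtain ⟨W, hW, V₀, hV₀, hWV⟩ := hmem
    obtain ⟨r, hr, hball⟩ := Metric.mem_nhds_iff.1 hW
    set V : Set X := {z | ∃ l : BC, ‖l‖ < r ∧ ∃ y ∈ V₀, z = l • y} with hV
    have hVU : V ⊆ U := by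
      rintro z ⟨l, hl, y, hy, rfl⟩
      have h1 : l ∈ W := hball (mem_ball_zero_iff.mpr hl)
      have h2 : (l, y) ∈ W ×ˢ V₀ := Set.mk_mem_prod h1 hy
      exact hWV h2
    refine ⟨V, ?_, ?_, hVU⟩
    · -- V ∈ nhds 0
      have hr2 : ((r/2 : ℝ) : ℂ) ≠ 0 := by
        simp only [ne_eq, Complex.ofReal_eq_zero]
        intro h; linarith
      set c : BC := (((r/2 : ℝ) : ℂ), ((r/2 : ℝ) : ℂ)) with hcdef
      set cinv : BC := ((((r/2 : ℝ) : ℂ))⁻¹, (((r/2 : ℝ) : ℂ))⁻¹) with hcinvdef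
      have hci : c * cinv = 1 := by
        simp only [hcdef, hcinvdef, Prod.mk_mul_mk, mul_inv_cancel₀ hr2]; rfl
      have hg : Continuous fun z : X => cinv • z := continuous_const.smul continuous_id
      have hgpre : (fun z : X => cinv • z) ⁻¹' V₀ ∈ nhds (0 : X) := by
        have := hg.continuousAt (x := (0 : X))
        exact this (by simpa using hV₀)
      apply Filter.mem_of_superset hgpre
      intro z hz
      refine ⟨c, ?_, cinv • z, hz, ?_⟩
      · have : ‖c‖ = r / 2 := by
          show max ‖((r/2 : ℝ) : ℂ)‖ ‖((r/2 : ℝ) : ℂ)‖ = r / 2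
          rw [max_self, Complex.norm_real, Real.norm_eq_abs, abs_of_nonneg (by linarith)]
        rw [this]; linarith
      · rw [smul_smul, hci, one_smul]
    · -- balanced
      rintro m hm z ⟨l, hl, y, hy, rfl⟩
      refine ⟨m * l, ?_, y, hy, smul_smul m l y⟩
      have hnm : ‖m‖ ≤ 1 := by
        have h1 : ‖m.1‖ ≤ 1 := by
          have := hm.1
          simpa [normK] using this
        have h2 : ‖m.2‖ ≤ 1 := by
          have := hm.2
          simpa [normK] using this
        exact max_le h1 h2
      calc ‖m * l‖ ≤ ‖m‖ * ‖l‖ := norm_mul_le m l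
        _ ≤ 1 * ‖l‖ := mul_le_mul_of_nonneg_right hnm (norm_nonneg l)
        _ < r := by simpa using hl
end
end

section
/- Every 𝔹ℂ-convex neighbourhood of 0 in a topological 𝔹ℂ-module contains a 𝔹ℂ-convex, 𝔹ℂ-balanced neighbourhood of 0. -/
noncomputable section

theorem convex_nhds_contains_convex_balanced {X : Type*} [AddCommGroup X] [Module BC X]
    [TopologicalSpace X] [T2Space X] [ContinuousAdd X] [ContinuousSMul BC X]
    (U : Set X) (hU : U ∈ nhds (0 : X)) (hc : BCConvex U) :
    ∃ V ∈ nhds (0 : X), BCConvex V ∧ BCBalanced V ∧ V ⊆ U := by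
  classical
  -- continuity of smul at (0,0)
  have hsm : Filter.Tendsto (fun p : BC × X => p.1 • p.2) (nhds ((0 : BC), (0 : X)))
      (nhds (0 : X)) := by
    have := (continuous_smul (M := BC) (X := X)).tendsto ((0 : BC), (0 : X))
    simpa using this
  have hU' : {p : BC × X | p.1 • p.2 ∈ U} ∈ nhds ((0 : BC), (0 : X)) := hsm hU
  rw [nhds_prod_eq, Filter.mem_prod_iff] at hU'
  obtain ⟨D, hD, W, hW, hDW⟩ := hU'
  obtain ⟨ε, hε, hball⟩ := Metric.mem_nhds_iff.mp hD
  have hε2 : (0 : ℝ) < ε / 2 := by positivity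
  set c : BC := ((ε/2 : ℂ), (ε/2 : ℂ)) with hc_def
  set c' : BC := (((ε/2 : ℂ))⁻¹, ((ε/2 : ℂ))⁻¹) with hc'_def
  have hεne : ((ε/2 : ℂ)) ≠ 0 := by
    simpa using hε2.ne'
  have hcc' : c * c' = 1 := by
    have : c * c' = ((ε/2 : ℂ) * ((ε/2 : ℂ))⁻¹, (ε/2 : ℂ) * ((ε/2 : ℂ))⁻¹) := rfl
    rw [this, mul_inv_cancel₀ hεne]
    rfl
  set V : Set X := {x | ∀ l : BC, normK l ≤ 1 → l • x ∈ U} with hV_def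
  have hnorm1 : ∀ l : BC, normK l ≤ 1 ↔ ‖l.1‖ ≤ 1 ∧ ‖l.2‖ ≤ 1 := by
    intro l
    rfl
  refine ⟨V, ?_, ?_, ?_, ?_⟩
  · -- V is a neighbourhood of 0
    refine Filter.mem_of_superset ?_ ?_ (x := (fun x : X => c' • x) ⁻¹' W)
    · have hcont : Filter.Tendsto (fun x : X => c' • x) (nhds 0) (nhds (0 : X)) := by
        have := (continuous_const_smul (T := X) c').tendsto (0 : X)
        simpa using this
      exact hcont hW
    · intro x hx l hl
      have hx' : c' • x ∈ W := hx
      have hmem : l * c ∈ D := by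
        apply hball
        rw [Metric.mem_ball, dist_zero_right]
        have h1 : ‖(l * c).1‖ < ε := by
          have : ‖(l * c).1‖ = ‖l.1‖ * (ε/2) := by
            simp [hc_def, map_mul, Complex.norm_real, abs_of_pos hε2, abs_of_pos hε]
          calc ‖(l * c).1‖ = ‖l.1‖ * (ε/2) := this
            _ ≤ 1 * (ε/2) := by
                exact mul_le_mul_of_nonneg_right ((hnorm1 l).mp hl).1 hε2.le
            _ < ε := by linarith
        have h2 : ‖(l * c).2‖ < ε := by
          have : ‖(l * c).2‖ = ‖l.2‖ * (ε/2) := by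
            simp [hc_def, map_mul, Complex.norm_real, abs_of_pos hε2, abs_of_pos hε]
          calc ‖(l * c).2‖ = ‖l.2‖ * (ε/2) := this
            _ ≤ 1 * (ε/2) := by
                exact mul_le_mul_of_nonneg_right ((hnorm1 l).mp hl).2 hε2.le
            _ < ε := by linarith
        rw [Prod.norm_def]
        exact max_lt h1 h2
      have hpair : ((l * c, c' • x) : BC × X) ∈ D ×ˢ W := ⟨hmem, hx'⟩
      have : (l * c) • (c' • x) ∈ U := hDW hpair
      have heq : (l * c) • (c' • x) = l • x := by
        rw [smul_smul, mul_assoc, hcc', mul_one]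
      rwa [heq] at this
  · -- V is BC-convex
    intro x hx y hy l hl0 hl1
    intro m hm
    have hxm := hx m hm
    have hym := hy m hm
    have := hc _ hxm _ hym l hl0 hl1
    have heq : m • (hypToBC l • x + hypToBC (1 - l) • y)
        = hypToBC l • (m • x) + hypToBC (1 - l) • (m • y) := by
      rw [smul_add, smul_comm m (hypToBC l), smul_comm m (hypToBC (1 - l))]
    rw [heq]
    exact this
  · -- V is BC-balanced
    intro l hl x hx m hm
    have hml : normK (m * l) ≤ 1 := by
      rw [hnorm1]
      constructor
      · have : ‖(m * l).1‖ = ‖m.1‖ * ‖l.1‖ := by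
          simp [map_mul]
        rw [this]
        exact mul_le_one₀ ((hnorm1 m).mp hm).1 (norm_nonneg _) ((hnorm1 l).mp hl).1
      · have : ‖(m * l).2‖ = ‖m.2‖ * ‖l.2‖ := by
          simp [map_mul]
        rw [this]
        exact mul_le_one₀ ((hnorm1 m).mp hm).2 (norm_nonneg _) ((hnorm1 l).mp hl).2
    have := hx (m * l) hml
    rwa [← smul_smul] at this
  · -- V ⊆ U
    intro x hx
    have h1 : normK (1 : BC) ≤ 1 := by
      rw [hnorm1]
      simp
    have := hx 1 h1
    rwa [one_smul] at this
end
end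

section
/- Let B be a 𝔹ℂ-convex, 𝔹ℂ-balanced, 𝔹ℂ-absorbing subset of a 𝔹ℂ-module X. Then the hyperbolic-valued Minkowski functional q_B(x) = inf_𝔻 {α >' 0 : x ∈ αB} is a 𝔻-valued seminorm on X, i.e., q_B(x+y) ≤' q_B(x) + q_B(y) and q_B(λx) = |λ|_k q_B(x) for all λ ∈ 𝔹ℂ. -/
noncomputable section

namespace GaugeDAux

open Set Pointwise

/-- The diagonal ring hom `ℂ →+* ℂ × ℂ`. -/
def diagHom : ℂ →+* BC := (RingHom.id ℂ).prod (RingHom.id ℂ)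

variable {X : Type*} [AddCommGroup X] [Module BC X]

/-- `ℂ`-module structure on a `BC`-module via the diagonal embedding. -/
instance modC : Module ℂ X := Module.compHom X diagHom

/-- `ℝ`-module structure on a `BC`-module. -/
instance modR : Module ℝ X := Module.compHom X (diagHom.comp (algebraMap ℝ ℂ))

lemma csmul_def (c : ℂ) (x : X) : c • x = embedC c • x := rfl

lemma rsmul_def (r : ℝ) (x : X) : r • x = hypToBC (r, r) • x := by
  show (diagHom.comp (algebraMap ℝ ℂ) r) • x = hypToBC (r, r) • x
  congr 1

instance : IsScalarTower ℝ ℂ X := by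
  constructor
  intro r c x
  rw [csmul_def, rsmul_def, csmul_def, smul_smul]
  congr 1

lemma bc_smul_rsmul (l : BC) (r : ℝ) (x : X) : l • r • x = r • l • x := by
  rw [rsmul_def, rsmul_def, smul_smul, smul_smul, mul_comm]

lemma bc_smul_csmul (l : BC) (c : ℂ) (x : X) : l • c • x = c • l • x := by
  rw [csmul_def, csmul_def, smul_smul, smul_smul, mul_comm]

lemma hypToBC_mul (a b : Hyp) :
    hypToBC a * hypToBC b = hypToBC (a.1 * b.1, a.2 * b.2) := by
  simp [hypToBC, Prod.mk_mul_mk]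

lemma hypToBC_diag_one : hypToBC ((1:ℝ), (1:ℝ)) = 1 := by
  rw [Prod.ext_iff]
  simp [hypToBC]

lemma diag_conj (e : BC) {t : ℝ} (ht : t ≠ 0) :
    hypToBC (t, t) * e * hypToBC (t⁻¹, t⁻¹) = e := by
  rw [mul_comm, ← mul_assoc, hypToBC_mul]
  simp only [inv_mul_cancel₀ ht]
  rw [hypToBC_diag_one, one_mul]

lemma diag_conj' (e : BC) {t : ℝ} (ht : t ≠ 0) :
    hypToBC (t⁻¹, t⁻¹) * hypToBC (t, t) * e = e := by
  rw [hypToBC_mul]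
  simp only [inv_mul_cancel₀ ht]
  rw [hypToBC_diag_one, one_mul]

/-- The component set associated to an idempotent `e`. -/
def Comp (e : BC) (B : Set X) : Set X := {y : X | ∃ b ∈ B, e • y = e • b}

variable {B : Set X}

lemma subset_comp (e : BC) : B ⊆ Comp e B := fun b hb => ⟨b, hb, rfl⟩

lemma comp_convex (hconv : BCConvex B) (e : BC) : Convex ℝ (Comp e B) := by
  intro y hy y' hy' a b ha hb hab
  obtain ⟨b₁, hb₁, h₁⟩ := hy
  obtain ⟨b₂, hb₂, h₂⟩ := hy'
  have hmem : a • b₁ + b • b₂ ∈ B := by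
    have := hconv b₁ hb₁ b₂ hb₂ (a, a) (by exact ⟨ha, ha⟩)
      (by constructor <;> simp <;> linarith)
    have h1 : (1 : Hyp) - (a, a) = (b, b) := by
      have hba : b = 1 - a := by linarith
      rw [Prod.ext_iff]
      simp [hba]
    rw [h1] at this
    rwa [← rsmul_def, ← rsmul_def] at this
  refine ⟨a • b₁ + b • b₂, hmem, ?_⟩
  rw [smul_add, smul_add, bc_smul_rsmul, bc_smul_rsmul, bc_smul_rsmul, bc_smul_rsmul,
    h₁, h₂]

lemma comp_absorbent (hbal : BCBalanced B) (habs : BCAbsorbing B) (e : BC) :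
    Absorbent ℝ (Comp e B) := by
  intro x
  obtain ⟨ε, ⟨hε₁, hε₂⟩, hε⟩ := habs x
  have hbB : hypToBC ε • x ∈ B := hε ε (Prod.le_def.2 ⟨hε₁.le, hε₂.le⟩) le_rfl
  refine Absorbs.of_norm ⟨max ε.1⁻¹ ε.2⁻¹, fun c hc => ?_⟩
  have hcpos : 0 < |c| := by
    have h1 : (0:ℝ) < ε.1⁻¹ := by positivity
    calc (0:ℝ) < ε.1⁻¹ := h1
    _ ≤ max ε.1⁻¹ ε.2⁻¹ := le_max_left _ _
    _ ≤ ‖c‖ := hc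
  have hc0 : c ≠ 0 := by intro h; simp [h] at hcpos
  -- show c⁻¹ • x ∈ B
  set l' : BC := (((c * ε.1)⁻¹ : ℝ), ((c * ε.2)⁻¹ : ℝ)) with hl'
  have hnorm : normK l' ≤ 1 := by
    have h1 : |(c * ε.1)⁻¹| ≤ 1 := by
      rw [abs_inv, abs_mul, abs_of_pos hε₁]
      rw [inv_le_one_iff₀]
      right
      have : ε.1⁻¹ ≤ |c| := le_trans (le_max_left _ _) hc
      calc (1:ℝ) = ε.1⁻¹ * ε.1 := by field_simp
      _ ≤ |c| * ε.1 := by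
          apply mul_le_mul_of_nonneg_right this (le_of_lt hε₁)
    have h2 : |(c * ε.2)⁻¹| ≤ 1 := by
      rw [abs_inv, abs_mul, abs_of_pos hε₂]
      rw [inv_le_one_iff₀]
      right
      have : ε.2⁻¹ ≤ |c| := le_trans (le_max_right _ _) hc
      calc (1:ℝ) = ε.2⁻¹ * ε.2 := by field_simp
      _ ≤ |c| * ε.2 := by
          apply mul_le_mul_of_nonneg_right this (le_of_lt hε₂)
    refine Prod.le_def.2 ⟨?_, ?_⟩
    · show ‖(((c * ε.1)⁻¹ : ℝ) : ℂ)‖ ≤ 1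
      rwa [Complex.norm_real, Real.norm_eq_abs]
    · show ‖(((c * ε.2)⁻¹ : ℝ) : ℂ)‖ ≤ 1
      rwa [Complex.norm_real, Real.norm_eq_abs]
  have hmem : c⁻¹ • x ∈ B := by
    have := hbal l' hnorm _ hbB
    rw [smul_smul] at this
    have heq : l' * hypToBC ε = hypToBC (c⁻¹, c⁻¹) := by
      have he1 : (ε.1 : ℂ) ≠ 0 := by exact_mod_cast hε₁.ne'
      have he2 : (ε.2 : ℂ) ≠ 0 := by exact_mod_cast hε₂.ne'
      have hcC : (c : ℂ) ≠ 0 := by exact_mod_cast hc0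
      simp only [hl', hypToBC, Prod.mk_mul_mk, Prod.mk.injEq]
      constructor <;>
      · push_cast
        field_simp
    rw [heq, ← rsmul_def] at this
    exact this
  intro y hy
  simp only [Set.mem_singleton_iff] at hy
  subst hy
  exact ⟨c⁻¹ • y, subset_comp e hmem, smul_inv_smul₀ hc0 y⟩

lemma comp_balanced (hbal : BCBalanced B) (e : BC) (hee : e * e = e)
    (hne : ∀ c : ℂ, ‖c‖ ≤ 1 → normK (embedC c * e) ≤ 1) :
    Balanced ℂ (Comp e B) := by
  intro a ha
  rintro _ ⟨y, ⟨b, hb, hyb⟩, rfl⟩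
  show a • y ∈ Comp e B
  refine ⟨(embedC a * e) • b, hbal _ (hne a ha) b hb, ?_⟩
  rw [csmul_def, smul_smul, smul_smul]
  have h1 : e * embedC a = embedC a * e := mul_comm _ _
  calc (e * embedC a) • y = (embedC a * e) • y := by rw [h1]
  _ = embedC a • (e • y) := by rw [smul_smul]
  _ = embedC a • (e • b) := by rw [hyb]
  _ = (embedC a * e) • b := by rw [smul_smul]
  _ = (e * (embedC a * e)) • b := by rw [← mul_assoc, h1, mul_assoc, hee]

lemma mem_smul_comp_iff (e : BC) {t : ℝ} (ht : 0 < t) (x : X) :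
    x ∈ t • Comp e B ↔ ∃ b ∈ B, e • x = hypToBC (t, t) • e • b := by
  rw [mem_smul_set_iff_inv_smul_mem₀ ht.ne']
  constructor
  · rintro ⟨b, hb, hxb⟩
    refine ⟨b, hb, ?_⟩
    calc e • x = (hypToBC (t, t) * e * hypToBC (t⁻¹, t⁻¹)) • x := by
          rw [diag_conj e ht.ne']
    _ = hypToBC (t, t) • e • hypToBC (t⁻¹, t⁻¹) • x := by
          rw [smul_smul, smul_smul]
    _ = hypToBC (t, t) • e • t⁻¹ • x := by rw [rsmul_def t⁻¹ x]
    _ = hypToBC (t, t) • e • b := by rw [hxb]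
  · rintro ⟨b, hb, hxb⟩
    refine ⟨b, hb, ?_⟩
    calc e • t⁻¹ • x = (e * hypToBC (t⁻¹, t⁻¹)) • x := by rw [rsmul_def, smul_smul]
    _ = (hypToBC (t⁻¹, t⁻¹) * e) • x := by rw [mul_comm]
    _ = hypToBC (t⁻¹, t⁻¹) • e • x := by rw [smul_smul]
    _ = hypToBC (t⁻¹, t⁻¹) • hypToBC (t, t) • e • b := by rw [hxb]
    _ = (hypToBC (t⁻¹, t⁻¹) * hypToBC (t, t) * e) • b := by rw [smul_smul, smul_smul]
    _ = e • b := by rw [diag_conj' e ht.ne']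

lemma gauge_comp_congr (e : BC) {y y' : X} (h : e • y = e • y') :
    gauge (Comp e B) y = gauge (Comp e B) y' := by
  unfold gauge
  congr 1
  ext r
  simp only [Set.mem_setOf_eq]
  refine and_congr_right fun hr => ?_
  rw [mem_smul_comp_iff e hr, mem_smul_comp_iff e hr]
  simp only [h]

/-- The defining set of `gaugeD`. -/
def Aset (B : Set X) (x : X) : Set Hyp :=
  {α : Hyp | (0 < α.1 ∧ 0 < α.2) ∧ x ∈ (fun b => hypToBC α • b) '' B}

lemma e1_add_e2 : BC.e1 + BC.e2 = 1 := by
  simp [BC.e1, BC.e2, Prod.ext_iff]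

lemma mem_Aset_iff (hconv : BCConvex B) (x : X) (α : Hyp) :
    α ∈ Aset B x ↔ (0 < α.1 ∧ 0 < α.2) ∧
      (∃ b ∈ B, BC.e1 • x = hypToBC (α.1, α.1) • BC.e1 • b) ∧
      (∃ b ∈ B, BC.e2 • x = hypToBC (α.2, α.2) • BC.e2 • b) := by
  constructor
  · rintro ⟨hpos, b, hb, rfl⟩
    constructor
    · exact hpos
    constructor
    · refine ⟨b, hb, ?_⟩
      show BC.e1 • hypToBC α • b = hypToBC (α.1, α.1) • BC.e1 • b
      rw [smul_smul, smul_smul]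
      congr 1
      simp [BC.e1, hypToBC, Prod.ext_iff]
    · refine ⟨b, hb, ?_⟩
      show BC.e2 • hypToBC α • b = hypToBC (α.2, α.2) • BC.e2 • b
      rw [smul_smul, smul_smul]
      congr 1
      simp [BC.e2, hypToBC, Prod.ext_iff]
  · rintro ⟨hpos, ⟨b, hb, h₁⟩, ⟨b', hb', h₂⟩⟩
    refine ⟨hpos, BC.e1 • b + BC.e2 • b', ?_, ?_⟩
    · have := hconv b hb b' hb' (1, 0) (by constructor <;> norm_num)
        (by constructor <;> norm_num)
      have h10 : hypToBC (1, 0) = BC.e1 := by simp [hypToBC, BC.e1]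
      have h01 : hypToBC ((1:Hyp) - (1, 0)) = BC.e2 := by
        have : ((1:Hyp) - (1, 0)) = ((0:ℝ), (1:ℝ)) := by
          rw [Prod.ext_iff]; norm_num
        rw [this]; simp [hypToBC, BC.e2]
      rwa [h10, h01] at this
    · show hypToBC α • (BC.e1 • b + BC.e2 • b') = x
      have key1 : hypToBC α • BC.e1 • b = BC.e1 • x := by
        rw [h₁, smul_smul, smul_smul]
        congr 1
        simp [BC.e1, hypToBC, Prod.ext_iff]
      have key2 : hypToBC α • BC.e2 • b' = BC.e2 • x := by
        rw [h₂, smul_smul, smul_smul]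
        congr 1
        simp [BC.e2, hypToBC, Prod.ext_iff]
      rw [smul_add, key1, key2, ← add_smul, e1_add_e2, one_smul]

lemma Aset_nonempty (habs : BCAbsorbing B) (x : X) : (Aset B x).Nonempty := by
  obtain ⟨ε, ⟨hε₁, hε₂⟩, hε⟩ := habs x
  refine ⟨(ε.1⁻¹, ε.2⁻¹), ⟨by positivity, by positivity⟩,
    hypToBC ε • x, hε ε (Prod.le_def.2 ⟨hε₁.le, hε₂.le⟩) le_rfl, ?_⟩
  show hypToBC (ε.1⁻¹, ε.2⁻¹) • hypToBC ε • x = x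
  rw [smul_smul]
  have h : hypToBC (ε.1⁻¹, ε.2⁻¹) * hypToBC ε = 1 := by
    rw [show hypToBC ε = hypToBC (ε.1, ε.2) from rfl, hypToBC_mul]
    simp only [inv_mul_cancel₀ hε₁.ne', inv_mul_cancel₀ hε₂.ne']
    exact hypToBC_diag_one
  rw [h, one_smul]

lemma fst_image_Aset (hconv : BCConvex B) (habs : BCAbsorbing B) (x : X) :
    Prod.fst '' Aset B x = {r : ℝ | 0 < r ∧ x ∈ r • Comp BC.e1 B} := by
  obtain ⟨α₀, hα₀⟩ := Aset_nonempty habs x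
  rw [mem_Aset_iff hconv] at hα₀
  obtain ⟨⟨h₀₁, h₀₂⟩, hP₁, hP₂⟩ := hα₀
  ext r
  constructor
  · rintro ⟨α, hα, rfl⟩
    rw [mem_Aset_iff hconv] at hα
    obtain ⟨⟨hr, _⟩, ⟨b, hb, h₁⟩, _⟩ := hα
    exact ⟨hr, (mem_smul_comp_iff BC.e1 hr x).2 ⟨b, hb, h₁⟩⟩
  · rintro ⟨hr, hx⟩
    obtain ⟨b, hb, h₁⟩ := (mem_smul_comp_iff BC.e1 hr x).1 hx
    exact ⟨(r, α₀.2), (mem_Aset_iff hconv x _).2 ⟨⟨hr, h₀₂⟩, ⟨b, hb, h₁⟩, hP₂⟩, rfl⟩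

lemma snd_image_Aset (hconv : BCConvex B) (habs : BCAbsorbing B) (x : X) :
    Prod.snd '' Aset B x = {r : ℝ | 0 < r ∧ x ∈ r • Comp BC.e2 B} := by
  obtain ⟨α₀, hα₀⟩ := Aset_nonempty habs x
  rw [mem_Aset_iff hconv] at hα₀
  obtain ⟨⟨h₀₁, h₀₂⟩, hP₁, hP₂⟩ := hα₀
  ext r
  constructor
  · rintro ⟨α, hα, rfl⟩
    rw [mem_Aset_iff hconv] at hα
    obtain ⟨⟨_, hr⟩, _, ⟨b, hb, h₂⟩⟩ := hα
    exact ⟨hr, (mem_smul_comp_iff BC.e2 hr x).2 ⟨b, hb, h₂⟩⟩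
  · rintro ⟨hr, hx⟩
    obtain ⟨b, hb, h₂⟩ := (mem_smul_comp_iff BC.e2 hr x).1 hx
    exact ⟨(α₀.1, r), (mem_Aset_iff hconv x _).2 ⟨⟨h₀₁, hr⟩, hP₁, ⟨b, hb, h₂⟩⟩, rfl⟩

lemma gaugeD_eq (hconv : BCConvex B) (habs : BCAbsorbing B) (x : X) :
    gaugeD B x = (gauge (Comp BC.e1 B) x, gauge (Comp BC.e2 B) x) := by
  unfold gaugeD gauge
  rw [show {α : Hyp | (0 < α.1 ∧ 0 < α.2) ∧ x ∈ (fun b => hypToBC α • b) '' B} = Aset B x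
    from rfl]
  rw [fst_image_Aset hconv habs x, snd_image_Aset hconv habs x]

end GaugeDAux

open GaugeDAux

theorem gaugeD_isDSeminorm {X : Type*} [AddCommGroup X] [Module BC X] (B : Set X)
    (hconv : BCConvex B) (hbal : BCBalanced B) (habs : BCAbsorbing B) :
    (∀ x y : X, gaugeD B (x + y) ≤ gaugeD B x + gaugeD B y) ∧
    (∀ l : BC, ∀ x : X, gaugeD B (l • x) = normK l * gaugeD B x) := by
  have hconv₁ := comp_convex hconv BC.e1
  have hconv₂ := comp_convex hconv BC.e2
  have habs₁ := comp_absorbent hbal habs BC.e1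
  have habs₂ := comp_absorbent hbal habs BC.e2
  have hbal₁ : Balanced ℂ (Comp BC.e1 B) := by
    apply comp_balanced hbal BC.e1 (by simp [BC.e1, Prod.ext_iff])
    intro c hc
    constructor <;> simp [normK, embedC, BC.e1] <;> try exact hc
  have hbal₂ : Balanced ℂ (Comp BC.e2 B) := by
    apply comp_balanced hbal BC.e2 (by simp [BC.e2, Prod.ext_iff])
    intro c hc
    constructor <;> simp [normK, embedC, BC.e2] <;> try exact hc
  constructor
  · intro x y
    rw [gaugeD_eq hconv habs, gaugeD_eq hconv habs, gaugeD_eq hconv habs]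
    exact ⟨gauge_add_le hconv₁ habs₁ x y, gauge_add_le hconv₂ habs₂ x y⟩
  · intro l x
    rw [gaugeD_eq hconv habs, gaugeD_eq hconv habs]
    have h1 : gauge (Comp BC.e1 B) (l • x) = gauge (Comp BC.e1 B) (l.1 • x) := by
      apply gauge_comp_congr
      rw [csmul_def, smul_smul, smul_smul]
      congr 1
      simp [BC.e1, embedC, Prod.ext_iff]
    have h2 : gauge (Comp BC.e2 B) (l • x) = gauge (Comp BC.e2 B) (l.2 • x) := by
      apply gauge_comp_congr
      rw [csmul_def, smul_smul, smul_smul]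
      congr 1
      simp [BC.e2, embedC, Prod.ext_iff]
    rw [h1, h2, gauge_smul hbal₁, gauge_smul hbal₂]
    simp [normK, Prod.ext_iff, Prod.mk_mul_mk]
end
end

section
/- Let X be a topological 𝔹ℂ-module, B a 𝔹ℂ-convex, 𝔹ℂ-balanced, 𝔹ℂ-absorbing subset, and q_B its hyperbolic-valued Minkowski functional. Set A_B = {x : q_B(x) <' 1} and C_B = {x : q_B(x) ≤' 1}. Then B° ⊆ A_B ⊆ B ⊆ C_B ⊆ cl(B); if B is open then B = A_B; if B is closed then B = C_B. -/
noncomputable section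

lemma hypToBC_mul (a b : Hyp) : hypToBC (a * b) = hypToBC a * hypToBC b := by
  simp [hypToBC, Prod.ext_iff]

lemma hypToBC_one : hypToBC 1 = 1 := by
  simp [hypToBC, Prod.ext_iff]

lemma hypToBC_smul_smul {X : Type*} [AddCommGroup X] [Module BC X]
    (a b : Hyp) (x : X) : hypToBC a • hypToBC b • x = hypToBC (a * b) • x := by
  rw [smul_smul, hypToBC_mul]

lemma normK_hypToBC_le_one {a : Hyp} (h0 : 0 ≤ a) (h1 : a ≤ 1) :
    normK (hypToBC a) ≤ 1 := by
  rcases h0 with ⟨h01, h02⟩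
  rcases h1 with ⟨h11, h12⟩
  constructor
  · show ‖((a.1 : ℝ) : ℂ)‖ ≤ (1:Hyp).1
    rw [Complex.norm_real, Real.norm_eq_abs, abs_of_nonneg h01]; exact h11
  · show ‖((a.2 : ℝ) : ℂ)‖ ≤ (1:Hyp).2
    rw [Complex.norm_real, Real.norm_eq_abs, abs_of_nonneg h02]; exact h12

def Sset {X : Type*} [AddCommGroup X] [Module BC X] (B : Set X) (x : X) : Set Hyp :=
  {α : Hyp | (0 < α.1 ∧ 0 < α.2) ∧ x ∈ (fun b => hypToBC α • b) '' B}

section Slemmas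

variable {X : Type*} [AddCommGroup X] [Module BC X] {B : Set X} {x : X}

lemma S_nonempty (habs : BCAbsorbing B) (x : X) : (Sset B x).Nonempty := by
  obtain ⟨ε, ⟨hε1, hε2⟩, hε⟩ := habs x
  refine ⟨(ε.1⁻¹, ε.2⁻¹), ⟨by positivity, by positivity⟩,
    hypToBC ε • x, hε ε ⟨hε1.le, hε2.le⟩ le_rfl, ?_⟩
  show hypToBC (ε.1⁻¹, ε.2⁻¹) • hypToBC ε • x = x
  rw [hypToBC_smul_smul]
  have : ((ε.1⁻¹, ε.2⁻¹) : Hyp) * ε = 1 := by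
    simp [Prod.ext_iff, inv_mul_cancel₀ hε1.ne', inv_mul_cancel₀ hε2.ne']
  rw [this, hypToBC_one, one_smul]

lemma S_upward (hbal : BCBalanced B) {a b : Hyp} (ha : a ∈ Sset B x)
    (hb1 : 0 < b.1) (hb2 : 0 < b.2) (hab : a ≤ b) : b ∈ Sset B x := by
  obtain ⟨⟨ha1, ha2⟩, c, hc, hxc⟩ := ha
  replace hxc : hypToBC a • c = x := hxc
  set l : Hyp := (a.1 / b.1, a.2 / b.2) with hl
  have hlb : normK (hypToBC l) ≤ 1 :=
    normK_hypToBC_le_one ⟨by positivity, by positivity⟩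
      ⟨div_le_one_of_le₀ hab.1 hb1.le, div_le_one_of_le₀ hab.2 hb2.le⟩
  refine ⟨⟨hb1, hb2⟩, hypToBC l • c, hbal _ hlb c hc, ?_⟩
  show hypToBC b • hypToBC l • c = x
  rw [hypToBC_smul_smul]
  have : b * l = a := by
    simp [hl, Prod.ext_iff]
    constructor <;> field_simp
  rw [this, hxc]

lemma S_mix (hconv : BCConvex B) {a b : Hyp} (ha : a ∈ Sset B x) (hb : b ∈ Sset B x) :
    ((a.1, b.2) : Hyp) ∈ Sset B x := by
  obtain ⟨⟨ha1, ha2⟩, c, hc, hxc⟩ := ha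
  obtain ⟨⟨hb1, hb2⟩, d, hd, hxd⟩ := hb
  replace hxc : hypToBC a • c = x := hxc
  replace hxd : hypToBC b • d = x := hxd
  have hmem : hypToBC (1, 0) • c + hypToBC ((1 : Hyp) - (1, 0)) • d ∈ B :=
    hconv c hc d hd (1, 0) ⟨zero_le_one, le_rfl⟩ ⟨le_rfl, zero_le_one⟩
  refine ⟨⟨ha1, hb2⟩, _, hmem, ?_⟩
  show hypToBC (a.1, b.2) • (hypToBC (1, 0) • c + hypToBC ((1 : Hyp) - (1, 0)) • d) = x
  simp only [smul_add, hypToBC_smul_smul]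
  have h1 : ((a.1, b.2) : Hyp) * (1, 0) = (a.1, 0) := by simp [Prod.ext_iff]
  have h2 : ((1 : Hyp) - (1, 0)) = ((0, 1) : Hyp) := by simp [Prod.ext_iff]
  have h3 : ((a.1, b.2) : Hyp) * (0, 1) = (0, b.2) := by simp [Prod.ext_iff]
  rw [h2, h1, h3]
  have hx1 : hypToBC (1, 0) • x = hypToBC (a.1, 0) • c := by
    rw [← hxc, hypToBC_smul_smul]
    have : ((1, 0) : Hyp) * a = (a.1, 0) := by simp [Prod.ext_iff]
    rw [this]
  have hx2 : hypToBC (0, 1) • x = hypToBC (0, b.2) • d := by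
    rw [← hxd, hypToBC_smul_smul]
    have : ((0, 1) : Hyp) * b = (0, b.2) := by simp [Prod.ext_iff]
    rw [this]
  rw [← hx1, ← hx2, ← add_smul]
  have : hypToBC (1, 0) + hypToBC (0, 1) = 1 := by simp [hypToBC, Prod.ext_iff]
  rw [this, one_smul]

lemma S_bdd1 : BddBelow (Prod.fst '' Sset B x) :=
  ⟨0, by rintro y ⟨a, ha, rfl⟩; exact ha.1.1.le⟩

lemma S_bdd2 : BddBelow (Prod.snd '' Sset B x) :=
  ⟨0, by rintro y ⟨a, ha, rfl⟩; exact ha.1.2.le⟩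

lemma gaugeLe_of_mem {a : Hyp} (ha : a ∈ Sset B x) :
    (gaugeD B x).1 ≤ a.1 ∧ (gaugeD B x).2 ≤ a.2 :=
  ⟨csInf_le S_bdd1 ⟨a, ha, rfl⟩, csInf_le S_bdd2 ⟨a, ha, rfl⟩⟩

lemma exists_S_fst_lt (habs : BCAbsorbing B) {r : ℝ} (h : (gaugeD B x).1 < r) :
    ∃ a ∈ Sset B x, a.1 < r := by
  obtain ⟨y, ⟨a, ha, rfl⟩, hy⟩ :=
    exists_lt_of_csInf_lt ((S_nonempty habs x).image Prod.fst) h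
  exact ⟨a, ha, hy⟩

lemma exists_S_snd_lt (habs : BCAbsorbing B) {r : ℝ} (h : (gaugeD B x).2 < r) :
    ∃ a ∈ Sset B x, a.2 < r := by
  obtain ⟨y, ⟨a, ha, rfl⟩, hy⟩ :=
    exists_lt_of_csInf_lt ((S_nonempty habs x).image Prod.snd) h
  exact ⟨a, ha, hy⟩

/-- If some element of `Sset B x` is `≤ 1` componentwise-mixed, then `x ∈ B`. -/
lemma mem_of_S_le_one (hbal : BCBalanced B) {a : Hyp} (ha : a ∈ Sset B x)
    (h1 : a.1 ≤ 1) (h2 : a.2 ≤ 1) : x ∈ B := by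
  obtain ⟨⟨ha1, ha2⟩, c, hc, hxc⟩ := ha
  replace hxc : hypToBC a • c = x := hxc
  rw [← hxc]
  exact hbal _ (normK_hypToBC_le_one ⟨ha1.le, ha2.le⟩ ⟨h1, h2⟩) c hc

lemma exists_S_lt (habs : BCAbsorbing B) (hconv : BCConvex B) {r : ℝ}
    (h1 : (gaugeD B x).1 < r) (h2 : (gaugeD B x).2 < r) :
    ∃ a ∈ Sset B x, a.1 < r ∧ a.2 < r := by
  obtain ⟨a, ha, ha1⟩ := exists_S_fst_lt habs h1
  obtain ⟨b, hb, hb2⟩ := exists_S_snd_lt habs h2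
  exact ⟨(a.1, b.2), S_mix hconv ha hb, ha1, hb2⟩

end Slemmas

theorem gaugeD_sets_inclusions {X : Type*} [AddCommGroup X] [Module BC X]
    [TopologicalSpace X] [T2Space X] [ContinuousAdd X] [ContinuousSMul BC X]
    (B : Set X) (hconv : BCConvex B) (hbal : BCBalanced B) (habs : BCAbsorbing B) :
    interior B ⊆ {x : X | ltH (gaugeD B x) 1} ∧
    {x : X | ltH (gaugeD B x) 1} ⊆ B ∧
    B ⊆ {x : X | gaugeD B x ≤ 1} ∧
    {x : X | gaugeD B x ≤ 1} ⊆ closure B ∧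
    (IsOpen B → B = {x : X | ltH (gaugeD B x) 1}) ∧
    (IsClosed B → B = {x : X | gaugeD B x ≤ 1}) := by
  -- continuity of the scalar action along the real diagonal
  have hcont : ∀ x : X, Continuous (fun t : ℝ => hypToBC (t, t) • x) := fun x =>
    ((Complex.continuous_ofReal.prodMk Complex.continuous_ofReal).smul continuous_const)
  have hdiag : ∀ (x : X) {s : ℝ}, s ≠ 0 →
      hypToBC (s⁻¹, s⁻¹) • hypToBC (s, s) • x = x := by
    intro x s hs
    rw [hypToBC_smul_smul]
    have : ((s⁻¹, s⁻¹) : Hyp) * (s, s) = 1 := by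
      simp [Prod.ext_iff, inv_mul_cancel₀ hs]
    rw [this, hypToBC_one, one_smul]
  -- Part 1
  have part1 : interior B ⊆ {x : X | ltH (gaugeD B x) 1} := by
    intro x hx
    have h1 : (fun t : ℝ => hypToBC (t, t) • x) 1 ∈ interior B := by
      show hypToBC ((1 : ℝ), (1 : ℝ)) • x ∈ interior B
      rw [show ((1:ℝ),(1:ℝ)) = (1 : Hyp) from rfl, hypToBC_one, one_smul]
      exact hx
    have hnhds : (fun t : ℝ => hypToBC (t, t) • x) ⁻¹' interior B ∈ nhds (1 : ℝ) :=
      (isOpen_interior.preimage (hcont x)).mem_nhds h1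
    obtain ⟨δ, hδ, hball⟩ := Metric.mem_nhds_iff.mp hnhds
    set s : ℝ := 1 + δ / 2 with hs
    have hs1 : 1 < s := by simp [hs]; positivity
    have hs0 : (0:ℝ) < s := by linarith
    have hsb : hypToBC (s, s) • x ∈ B := by
      have : s ∈ Metric.ball (1:ℝ) δ := by
        simp [hs, Metric.mem_ball, Real.dist_eq, abs_of_nonneg hδ.le]
        linarith
      exact interior_subset (hball this)
    have hmem : ((s⁻¹, s⁻¹) : Hyp) ∈ Sset B x := by
      refine ⟨⟨by positivity, by positivity⟩, hypToBC (s, s) • x, hsb, hdiag x hs0.ne'⟩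
    have hle := gaugeLe_of_mem hmem
    have hinv : s⁻¹ < 1 := inv_lt_one_of_one_lt₀ hs1
    exact ⟨lt_of_le_of_lt hle.1 hinv, lt_of_le_of_lt hle.2 hinv⟩
  -- Part 2
  have part2 : {x : X | ltH (gaugeD B x) 1} ⊆ B := by
    intro x hx
    obtain ⟨a, ha, ha1, ha2⟩ := exists_S_lt habs hconv hx.1 hx.2
    exact mem_of_S_le_one hbal ha ha1.le ha2.le
  -- Part 3
  have part3 : B ⊆ {x : X | gaugeD B x ≤ 1} := by
    intro x hx
    have hmem : ((1 : Hyp)) ∈ Sset B x := by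
      refine ⟨⟨one_pos, one_pos⟩, x, hx, ?_⟩
      show hypToBC 1 • x = x
      rw [hypToBC_one, one_smul]
    have hle := gaugeLe_of_mem hmem
    exact ⟨hle.1, hle.2⟩
  -- Part 4
  have part4 : {x : X | gaugeD B x ≤ 1} ⊆ closure B := by
    intro x hx
    set s : ℕ → ℝ := fun n => 1 + 1 / (n + 1) with hsdef
    have hs1 : ∀ n, 1 < s n := by
      intro n; simp [hsdef]; positivity
    have hs0 : ∀ n, (0:ℝ) < s n := fun n => lt_trans one_pos (hs1 n)
    have hSn : ∀ n, ((s n, s n) : Hyp) ∈ Sset B x := by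
      intro n
      obtain ⟨a, ha, ha1, ha2⟩ :=
        exists_S_lt (x := x) habs hconv (lt_of_le_of_lt hx.1 (hs1 n))
          (lt_of_le_of_lt hx.2 (hs1 n))
      exact S_upward hbal ha (hs0 n) (hs0 n) ⟨ha1.le, ha2.le⟩
    have hu : ∀ n, hypToBC ((s n)⁻¹, (s n)⁻¹) • x ∈ B := by
      intro n
      obtain ⟨⟨_, _⟩, c, hc, hxc⟩ := hSn n
      replace hxc : hypToBC (s n, s n) • c = x := hxc
      rw [← hxc, hdiag c (hs0 n).ne']
      exact hc
    have htend : Filter.Tendsto (fun n : ℕ => hypToBC ((s n)⁻¹, (s n)⁻¹) • x)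
        Filter.atTop (nhds x) := by
      have hts : Filter.Tendsto s Filter.atTop (nhds 1) := by
        have := tendsto_one_div_add_atTop_nhds_zero_nat (𝕜 := ℝ)
        have h2 : Filter.Tendsto s Filter.atTop (nhds (1 + 0)) :=
          Filter.Tendsto.add tendsto_const_nhds this
        simpa using h2
      have hti : Filter.Tendsto (fun n => (s n)⁻¹) Filter.atTop (nhds 1) := by
        have := hts.inv₀ one_ne_zero
        simpa using this
      have key : Filter.Tendsto (fun n : ℕ => hypToBC ((s n)⁻¹, (s n)⁻¹) • x)
          Filter.atTop (nhds (hypToBC ((1:ℝ), (1:ℝ)) • x)) :=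
        ((hcont x).tendsto 1).comp hti
      rwa [show ((1:ℝ),(1:ℝ)) = (1 : Hyp) from rfl, hypToBC_one, one_smul] at key
    exact mem_closure_of_tendsto htend (Filter.Eventually.of_forall hu)
  refine ⟨part1, part2, part3, part4, ?_, ?_⟩
  · intro hopen
    apply Set.Subset.antisymm
    · intro x hxB
      exact part1 (by rwa [hopen.interior_eq])
    · exact part2
  · intro hclosed
    apply Set.Subset.antisymm
    · exact part3
    · intro x hx
      have := part4 hx
      rwa [hclosed.closure_eq] at this
end
end
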